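/- arXiv:1304.3484 — 2 statements merged into one kernel-verified Lean document; each statement's English description precedes it below -/
import Mathlib

section
/- Let h>0, α,β∈(0,1], d≥1, let A be a real d×d matrix, γ: ℕ→ℝ^d a sequence, and x_a, x_0∈ℝ^d. Then the unique solution of the semilinear sequential Caputo initial value problem (C_β(C_α X))(n) = A·X(n) + γ(n), X(0)=x_a, (C_α X)(0)=x_0 is given for every n∈ℕ by X(n) = ∑_{k=0}^{n} A^k·( φ_{k,k}(n−k)·x_a + φ_{k+1,k}(n−k)·x_0 ) + ∑_{k=0}^{n} A^k·∑_{r=0}^{n−2(k+1)} φ̃_{k+1,k+1}(n−2(k+1)−r)·γ(r), where all inner sums with n−2(k+1)<0 are empty and all terms with 2k>n in the first sum vanish. -/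
/-- `c γ m = Γ(γ+m)/(Γ(γ)·Γ(m+1))`. -/
noncomputable def cCoeff (γ : ℝ) (m : ℕ) : ℝ :=
  Real.Gamma (γ + m) / (Real.Gamma γ * Real.Gamma (m + 1))

/-- Caputo `h`-difference of order `α ∈ (0,1]` of an `ℝ^d`-valued sequence. -/
noncomputable def caputo (h α : ℝ) {d : ℕ} (u : ℕ → Fin d → ℝ) (n : ℕ) : Fin d → ℝ :=
  if α < 1 then
    h ^ (1 - α) • ∑ k ∈ Finset.range (n + 1), cCoeff (1 - α) (n - k) • (h⁻¹ • (u (k + 1) - u k))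
  else h⁻¹ • (u (n + 1) - u n)

/-- `X` solves the sequential Caputo initial value problem
`(C_β(C_α X))(n) = f(n, X(n))`, `X(0) = x_a`, `(C_α X)(0) = x_0`. -/
noncomputable def IsSolIVP (h α β : ℝ) {d : ℕ} (f : ℕ → (Fin d → ℝ) → Fin d → ℝ)
    (xa x0 : Fin d → ℝ) (X : ℕ → Fin d → ℝ) : Prop :=
  (∀ n : ℕ, caputo h β (caputo h α X) n = f n (X n)) ∧ X 0 = xa ∧ caputo h α X 0 = x0

/-- The function `φ_{k,s}` of the paper. -/
noncomputable def phi (h α β : ℝ) (k s : ℕ) (n : ℤ) : ℝ :=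
  if (k : ℤ) ≤ n then
    Real.Gamma ((n : ℝ) - (k : ℝ) + 1 + (k : ℝ) * α + (s : ℝ) * β)
      / (Real.Gamma ((k : ℝ) * α + (s : ℝ) * β + 1) * Real.Gamma ((n : ℝ) - (k : ℝ) + 1))
      * h ^ ((k : ℝ) * α + (s : ℝ) * β)
  else 0

/-- The function `φ̃_{k,s}` of the paper. -/
noncomputable def phiTilde (h α β : ℝ) (k s : ℕ) (m : ℤ) : ℝ :=
  if 0 ≤ m then
    Real.Gamma ((m : ℝ) + (k : ℝ) * α + (s : ℝ) * β)
      / (Real.Gamma ((k : ℝ) * α + (s : ℝ) * β) * Real.Gamma ((m : ℝ) + 1))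
      * h ^ ((k : ℝ) * α + (s : ℝ) * β)
  else 0

open Finset Polynomial

/-! ### Auxiliary lemmas on `cCoeff` -/

lemma auxGamma_add_nat (γ : ℝ) (hγ : 0 < γ) (m : ℕ) :
    Real.Gamma (γ + m) = (ascPochhammer ℝ m).eval γ * Real.Gamma γ := by
  induction m with
  | zero => simp
  | succ m ih =>
    have h1 : γ + (m + 1 : ℕ) = (γ + m) + 1 := by push_cast; ring
    rw [h1, Real.Gamma_add_one (by positivity), ih, ascPochhammer_succ_eval]
    ring

lemma cCoeff_eq (γ : ℝ) (hγ : 0 < γ) (m : ℕ) :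
    cCoeff γ m = (ascPochhammer ℝ m).eval γ / m.factorial := by
  have h1 : Real.Gamma ((m : ℝ) + 1) = m.factorial := Real.Gamma_nat_eq_factorial m
  have h2 : Real.Gamma γ ≠ 0 := (Real.Gamma_pos_of_pos hγ).ne'
  rw [cCoeff, auxGamma_add_nat γ hγ, h1, mul_comm (Real.Gamma γ)]
  field_simp

lemma cCoeff_one (m : ℕ) : cCoeff 1 m = 1 := by
  rw [cCoeff_eq 1 one_pos, ascPochhammer_eval_one]
  have : ((m.factorial : ℝ)) ≠ 0 := by exact_mod_cast m.factorial_ne_zero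
  field_simp

lemma asc_vdm (x y : ℝ) : ∀ m : ℕ,
    (ascPochhammer ℝ m).eval (x + y) =
      ∑ i ∈ range (m + 1), (m.choose i : ℝ) *
        ((ascPochhammer ℝ i).eval x * (ascPochhammer ℝ (m - i)).eval y)
  | 0 => by simp
  | (m+1) => by
    rw [Finset.sum_choose_succ_mul (fun i j => (ascPochhammer ℝ i).eval x *
      (ascPochhammer ℝ j).eval y) m]
    rw [ascPochhammer_succ_eval, asc_vdm x y m, Finset.sum_mul]
    rw [← Finset.sum_add_distrib]
    refine Finset.sum_congr rfl fun i hi => ?_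
    have him : i ≤ m := Nat.lt_succ_iff.mp (Finset.mem_range.mp hi)
    have h1 : ((m - i : ℕ) : ℝ) = (m : ℝ) - i := by
      push_cast [Nat.cast_sub him]; ring
    have h2 : (m + 1 : ℕ) - i = (m - i) + 1 := by omega
    rw [h2, ascPochhammer_succ_eval, ascPochhammer_succ_eval]
    rw [h1]
    ring

lemma cCoeff_vdm (γ δ : ℝ) (hγ : 0 < γ) (hδ : 0 < δ) (m : ℕ) :
    ∑ j ∈ range (m + 1), cCoeff γ j * cCoeff δ (m - j) = cCoeff (γ + δ) m := by
  rw [cCoeff_eq _ (by positivity), asc_vdm, Finset.sum_div]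
  refine Finset.sum_congr rfl fun j hj => ?_
  have hjm : j ≤ m := Nat.lt_succ_iff.mp (Finset.mem_range.mp hj)
  rw [cCoeff_eq _ hγ, cCoeff_eq _ hδ]
  have hfac : (m.choose j : ℝ) * j.factorial * (m - j).factorial = m.factorial := by
    exact_mod_cast congrArg (Nat.cast : ℕ → ℝ)
      (Nat.choose_mul_factorial_mul_factorial hjm)
  have h1 : (j.factorial : ℝ) ≠ 0 := by exact_mod_cast j.factorial_ne_zero
  have h2 : ((m - j).factorial : ℝ) ≠ 0 := by exact_mod_cast (m - j).factorial_ne_zero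
  have h3 : (m.factorial : ℝ) ≠ 0 := by exact_mod_cast m.factorial_ne_zero
  field_simp
  rw [← hfac]
  ring

lemma cCoeff_vdm' (γ δ : ℝ) (hγ : 0 < γ) (hδ : 0 < δ) (m : ℕ) :
    ∑ j ∈ range (m + 1), cCoeff γ (m - j) * cCoeff δ j = cCoeff (γ + δ) m := by
  rw [show γ + δ = δ + γ by ring, ← cCoeff_vdm δ γ hδ hγ m]
  exact Finset.sum_congr rfl fun j hj => mul_comm _ _

/-- cCoeff with an integer argument, zero for negatives. -/
noncomputable def cZ (γ : ℝ) (m : ℤ) : ℝ := if 0 ≤ m then cCoeff γ m.toNat else 0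

lemma cZ_conv (γ δ : ℝ) (hγ : 0 < γ) (hδ : 0 < δ) (m t : ℕ) :
    ∑ r ∈ range m, cCoeff γ (m - 1 - r) * cZ δ ((r : ℤ) - t) =
      cZ (γ + δ) ((m : ℤ) - 1 - t) := by
  rcases le_or_gt m t with hmt | htm
  · rw [Finset.sum_eq_zero, cZ, if_neg (by omega)]
    intro r hr
    have : ¬ (0 : ℤ) ≤ (r : ℤ) - t := by
      have := Finset.mem_range.mp hr; omega
    rw [cZ, if_neg this, mul_zero]
  · have hsub : Finset.Ico t m ⊆ Finset.range m := by
      intro r hr; simp only [Finset.mem_range, Finset.mem_Ico] at *; omega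
    rw [← Finset.sum_subset hsub (by
      intro r hr hr2
      simp only [Finset.mem_range, Finset.mem_Ico, not_and, not_le] at hr hr2
      rw [cZ, if_neg (by omega), mul_zero])]
    rw [Finset.sum_Ico_eq_sum_range]
    have hrange : m - t = (m - 1 - t) + 1 := by omega
    rw [hrange]
    rw [show cZ (γ + δ) ((m : ℤ) - 1 - t) = cCoeff (γ + δ) (m - 1 - t) by
      rw [cZ, if_pos (by omega)]; congr 1; omega]
    rw [← cCoeff_vdm' γ δ hγ hδ (m - 1 - t)]
    refine Finset.sum_congr rfl fun j hj => ?_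
    have hjm : j ≤ m - 1 - t := Nat.lt_succ_iff.mp (Finset.mem_range.mp hj)
    congr 1
    · congr 1; omega
    · rw [cZ, if_pos (by omega : (0:ℤ) ≤ ((t + j : ℕ) : ℤ) - t)]
      congr 1; omega

lemma key_conv (h γ δ e : ℝ) (hh : 0 < h) (hγ : 0 < γ) (hδ : 0 < δ) (m t : ℕ) :
    ∑ r ∈ range m, (h ^ γ * cCoeff γ (m - 1 - r)) * (h ^ e * cZ δ ((r : ℤ) - t))
      = h ^ (γ + e) * cZ (γ + δ) ((m : ℤ) - 1 - t) := by
  rw [← cZ_conv γ δ hγ hδ m t, Finset.mul_sum, Real.rpow_add hh]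
  exact Finset.sum_congr rfl fun r _ => by ring

/-! ### `phi`/`phiTilde` in terms of `cZ` -/

lemma phi_kk (h α β : ℝ) (k n : ℕ) :
    phi h α β k k ((n : ℤ) - k)
      = h ^ ((k : ℝ) * α + (k : ℝ) * β) * cZ ((k : ℝ) * α + (k : ℝ) * β + 1)
          ((n : ℤ) - 2 * k) := by
  simp only [phi, cZ, cCoeff]
  by_cases hc : (0 : ℤ) ≤ (n : ℤ) - 2 * k
  · rw [if_pos (by omega : ((k : ℤ) ≤ (n : ℤ) - k)), if_pos hc]
    have h1 : ((((n : ℤ) - 2 * (k : ℤ)).toNat : ℕ) : ℝ) = (n : ℝ) - 2 * k := by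
      have h2 : (((( (n : ℤ) - 2 * (k : ℤ)).toNat : ℕ) : ℤ) : ℝ) = (((n : ℤ) - 2 * k : ℤ) : ℝ) := by
        rw [Int.toNat_of_nonneg hc]
      push_cast at h2 ⊢
      linarith
    rw [h1]
    push_cast
    rw [show (n : ℝ) - k - k + 1 + (k : ℝ) * α + (k : ℝ) * β
        = (k : ℝ) * α + (k : ℝ) * β + 1 + ((n : ℝ) - 2 * k) by ring,
      show (n : ℝ) - k - k + 1 = (n : ℝ) - 2 * k + 1 by ring]
    ring
  · rw [if_neg (by omega : ¬ ((k : ℤ) ≤ (n : ℤ) - k)), if_neg hc, mul_zero]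

lemma phi_k1k (h α β : ℝ) (k n : ℕ) :
    phi h α β (k + 1) k ((n : ℤ) - k)
      = h ^ (((k : ℝ) + 1) * α + (k : ℝ) * β) * cZ (((k : ℝ) + 1) * α + (k : ℝ) * β + 1)
          ((n : ℤ) - (2 * k + 1)) := by
  simp only [phi, cZ, cCoeff]
  by_cases hc : (0 : ℤ) ≤ (n : ℤ) - (2 * k + 1)
  · rw [if_pos (by push_cast; omega : (((k : ℕ) + 1 : ℕ) : ℤ) ≤ (n : ℤ) - k), if_pos hc]
    have h1 : ((((n : ℤ) - (2 * (k : ℤ) + 1)).toNat : ℕ) : ℝ) = (n : ℝ) - (2 * k + 1) := by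
      have h2 : (((((n : ℤ) - (2 * (k : ℤ) + 1)).toNat : ℕ) : ℤ) : ℝ)
          = ((((n : ℤ) - (2 * k + 1)) : ℤ) : ℝ) := by
        rw [Int.toNat_of_nonneg hc]
      push_cast at h2 ⊢
      linarith
    rw [h1]
    push_cast
    rw [show (n : ℝ) - k - (k + 1) + 1 + (k + 1) * α + (k : ℝ) * β
        = ((k : ℝ) + 1) * α + (k : ℝ) * β + 1 + ((n : ℝ) - (2 * k + 1)) by ring,
      show (n : ℝ) - k - (k + 1) + 1 = (n : ℝ) - (2 * k + 1) + 1 by ring]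
    ring
  · rw [if_neg (by push_cast; omega : ¬ ((((k : ℕ) + 1 : ℕ) : ℤ) ≤ (n : ℤ) - k)),
      if_neg hc, mul_zero]

lemma phiTilde_kk (h α β : ℝ) (k : ℕ) (M : ℤ) :
    phiTilde h α β k k M
      = h ^ ((k : ℝ) * α + (k : ℝ) * β) * cZ ((k : ℝ) * α + (k : ℝ) * β) M := by
  simp only [phiTilde, cZ, cCoeff]
  by_cases hc : (0 : ℤ) ≤ M
  · rw [if_pos hc, if_pos hc]
    have h1 : ((M.toNat : ℕ) : ℝ) = ((M : ℤ) : ℝ) := by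
      exact_mod_cast congrArg (Int.cast : ℤ → ℝ) (Int.toNat_of_nonneg hc)
    rw [h1]
    rw [show ((M : ℤ) : ℝ) + (k : ℝ) * α + (k : ℝ) * β
        = (k : ℝ) * α + (k : ℝ) * β + ((M : ℤ) : ℝ) by ring]
    ring
  · rw [if_neg hc, if_neg hc, mul_zero]

lemma phi_vanish (h α β : ℝ) (k s : ℕ) (z : ℤ) (hz : z < k) : phi h α β k s z = 0 :=
  if_neg (by omega)

lemma phiTilde_vanish (h α β : ℝ) (k s : ℕ) (z : ℤ) (hz : z < 0) : phiTilde h α β k s z = 0 :=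
  if_neg (by omega)

/-! ### Convolution identities -/

lemma conv_I1 (h α β : ℝ) (m k : ℕ) (hh : 0 < h) (hα : 0 < α) (hβ : 0 < β) :
    ∑ r ∈ range m, (h ^ (α + β) * cCoeff (α + β) (m - 1 - r)) * phi h α β k k ((r : ℤ) - k)
      = phi h α β (k + 1) (k + 1) (((m + 1 : ℕ) : ℤ) - ((k + 1 : ℕ) : ℤ)) := by
  simp only [phi_kk]
  have hkc := key_conv h (α + β) ((k : ℝ) * α + (k : ℝ) * β + 1) ((k : ℝ) * α + (k : ℝ) * β)
    hh (by positivity) (by positivity) m (2 * k)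
  push_cast at hkc
  rw [hkc]
  congr 1
  · congr 1; push_cast; ring
  · congr 1
    · push_cast; ring
    · push_cast; ring

lemma conv_I2 (h α β : ℝ) (m k : ℕ) (hh : 0 < h) (hα : 0 < α) (hβ : 0 < β) :
    ∑ r ∈ range m, (h ^ (α + β) * cCoeff (α + β) (m - 1 - r)) * phi h α β (k + 1) k ((r : ℤ) - k)
      = phi h α β (k + 1 + 1) (k + 1) (((m + 1 : ℕ) : ℤ) - ((k + 1 : ℕ) : ℤ)) := by
  simp only [phi_k1k]
  have hkc := key_conv h (α + β) (((k : ℝ) + 1) * α + (k : ℝ) * β + 1)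
    (((k : ℝ) + 1) * α + (k : ℝ) * β) hh (by positivity) (by positivity) m (2 * k + 1)
  push_cast at hkc
  rw [hkc]
  congr 1
  · congr 1; push_cast; ring
  · congr 1
    · push_cast; ring
    · push_cast; ring

lemma conv_I3 (h α β : ℝ) (m k s : ℕ) (hh : 0 < h) (hα : 0 < α) (hβ : 0 < β) :
    ∑ r ∈ range m, (h ^ (α + β) * cCoeff (α + β) (m - 1 - r))
        * phiTilde h α β (k + 1) (k + 1) ((r : ℤ) - 2 * ((k : ℤ) + 1) - (s : ℤ))
      = phiTilde h α β (k + 1 + 1) (k + 1 + 1)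
          (((m + 1 : ℕ) : ℤ) - 2 * (((k + 1 : ℕ) : ℤ) + 1) - (s : ℤ)) := by
  simp only [phiTilde_kk, sub_sub]
  have hkc := key_conv h (α + β) (((k : ℕ) + 1 : ℕ) * α + ((k : ℕ) + 1 : ℕ) * β)
    (((k : ℕ) + 1 : ℕ) * α + ((k : ℕ) + 1 : ℕ) * β) hh (by positivity)
    (by push_cast; positivity) m (2 * (k + 1) + s)
  push_cast at hkc ⊢
  rw [hkc]
  congr 1
  · congr 1; ring
  · congr 1
    · ring
    · ring

/-! ### Inversion of the Caputo difference -/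

lemma caputo_inv {d : ℕ} (h α : ℝ) (hh : 0 < h) (hα1 : 0 < α) (hα2 : α ≤ 1)
    (u v : ℕ → Fin d → ℝ) (huv : ∀ n, caputo h α u n = v n) (m : ℕ) :
    u (m + 1) = u 0 + (h ^ (α : ℝ)) • ∑ n ∈ range (m + 1), cCoeff α (m - n) • v n := by
  have hne : h ≠ 0 := hh.ne'
  rcases lt_or_eq_of_le hα2 with hα | hα
  · set E : ℕ → Fin d → ℝ := fun k => (h ^ ((1 : ℝ) - α) * h⁻¹) • (u (k + 1) - u k) with hE
    have hv : ∀ n, v n = ∑ k ∈ range (n + 1), cCoeff (1 - α) (n - k) • E k := by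
      intro n
      rw [← huv n, caputo, if_pos hα, Finset.smul_sum]
      refine Finset.sum_congr rfl fun k _ => ?_
      simp only [hE, smul_smul]
      ring_nf
    have hS : ∑ n ∈ range (m + 1), cCoeff α (m - n) • v n
        = ∑ n ∈ range (m + 1), ∑ k ∈ range (n + 1),
            (cCoeff α (m - n) * cCoeff (1 - α) (n - k)) • E k := by
      refine Finset.sum_congr rfl fun n _ => ?_
      rw [hv n, Finset.smul_sum]
      exact Finset.sum_congr rfl fun k _ => (smul_smul _ _ _)
    rw [hS, Finset.sum_comm' (t' := range (m + 1)) (s' := fun k => Finset.Ico k (m + 1))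
      (by intro x y; simp only [Finset.mem_range, Finset.mem_Ico]; omega)]
    have hinner : ∀ k ∈ range (m + 1),
        ∑ n ∈ Finset.Ico k (m + 1), (cCoeff α (m - n) * cCoeff (1 - α) (n - k)) • E k
          = E k := by
      intro k hk
      have hkm : k ≤ m := Nat.lt_succ_iff.mp (Finset.mem_range.mp hk)
      rw [← Finset.sum_smul, Finset.sum_Ico_eq_sum_range]
      have h1 : m + 1 - k = (m - k) + 1 := by omega
      rw [h1]
      have h2 : ∑ j ∈ range ((m - k) + 1), cCoeff α (m - (k + j)) * cCoeff (1 - α) (k + j - k)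
          = cCoeff (α + (1 - α)) (m - k) := by
        rw [← cCoeff_vdm' α (1 - α) hα1 (by linarith) (m - k)]
        refine Finset.sum_congr rfl fun j hj => ?_
        have : j ≤ m - k := Nat.lt_succ_iff.mp (Finset.mem_range.mp hj)
        congr 2 <;> omega
      rw [h2, show α + (1 - α) = 1 by ring, cCoeff_one, one_smul]
    rw [Finset.sum_congr rfl hinner]
    have hsum : ∑ k ∈ range (m + 1), E k
        = (h ^ ((1 : ℝ) - α) * h⁻¹) • (u (m + 1) - u 0) := by
      rw [hE, ← Finset.smul_sum, Finset.sum_range_sub]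
    rw [hsum, smul_smul]
    rw [show (h ^ (α:ℝ) * (h ^ ((1:ℝ) - α) * h⁻¹)) = h ^ (α:ℝ) * h ^ ((1:ℝ)-α) * h⁻¹ by ring,
      ← Real.rpow_add hh, show α + (1 - α) = (1:ℝ) by ring, Real.rpow_one,
      mul_inv_cancel₀ hne, one_smul]
    abel
  · subst hα
    have hv : ∀ n, v n = h⁻¹ • (u (n + 1) - u n) := by
      intro n; rw [← huv n, caputo, if_neg (lt_irrefl _)]
    have : ∑ n ∈ range (m + 1), cCoeff 1 (m - n) • v n
        = h⁻¹ • (u (m + 1) - u 0) := by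
      rw [show (h⁻¹ • (u (m + 1) - u 0) : Fin d → ℝ)
          = ∑ n ∈ range (m + 1), h⁻¹ • (u (n + 1) - u n) by
        rw [← Finset.smul_sum, Finset.sum_range_sub]]
      exact Finset.sum_congr rfl fun n _ => by rw [hv n, cCoeff_one, one_smul]
    rw [this, smul_smul, Real.rpow_one, mul_inv_cancel₀ hne, one_smul]
    abel

/-! ### The Volterra equation -/

lemma volterra {d : ℕ} (h α β : ℝ) (hh : 0 < h)
    (hα1 : 0 < α) (hα2 : α ≤ 1) (hβ1 : 0 < β) (hβ2 : β ≤ 1)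
    (A : Matrix (Fin d) (Fin d) ℝ) (γ : ℕ → Fin d → ℝ)
    (xa x0 : Fin d → ℝ) (X : ℕ → Fin d → ℝ)
    (hX : IsSolIVP h α β (fun n x => A.mulVec x + γ n) xa x0 X) (m : ℕ) :
    X (m + 1) = xa + (h ^ (α : ℝ) * cCoeff (α + 1) m) • x0
      + ∑ r ∈ range m, (h ^ (α + β) * cCoeff (α + β) (m - 1 - r))
          • (A.mulVec (X r) + γ r) := by
  obtain ⟨heq, hxa, hx0⟩ := hX
  set w : ℕ → Fin d → ℝ := fun r => A.mulVec (X r) + γ r with hw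
  have hZ : ∀ n, caputo h α X n
      = x0 + (h ^ (β : ℝ)) • ∑ r ∈ range n, cCoeff β (n - 1 - r) • w r := by
    intro n
    cases n with
    | zero => simp [hx0]
    | succ p =>
      have := caputo_inv h β hh hβ1 hβ2 (caputo h α X) w (fun n => heq n) p
      rw [this, hx0]
      simp only [Nat.add_sub_cancel]
  have hXm := caputo_inv h α hh hα1 hα2 X (fun n => caputo h α X n) (fun n => rfl) m
  have hsum1 : ∑ n ∈ range (m + 1), cCoeff α (m - n) = cCoeff (α + 1) m := by
    have := cCoeff_vdm' α 1 hα1 one_pos m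
    simpa [cCoeff_one] using this
  have expand : ∑ n ∈ range (m + 1), cCoeff α (m - n) • caputo h α X n
      = cCoeff (α + 1) m • x0
        + ∑ n ∈ range (m + 1), ∑ r ∈ range n,
            (h ^ (β : ℝ) * (cCoeff α (m - n) * cCoeff β (n - 1 - r))) • w r := by
    have : ∀ n ∈ range (m + 1), cCoeff α (m - n) • caputo h α X n
        = cCoeff α (m - n) • x0 + ∑ r ∈ range n,
            (h ^ (β : ℝ) * (cCoeff α (m - n) * cCoeff β (n - 1 - r))) • w r := by
      intro n _
      rw [hZ n, smul_add]
      congr 1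
      rw [smul_smul, Finset.smul_sum]
      refine Finset.sum_congr rfl fun r _ => ?_
      rw [smul_smul]
      ring_nf
    rw [Finset.sum_congr rfl this, Finset.sum_add_distrib, ← Finset.sum_smul, hsum1]
  have swap : ∑ n ∈ range (m + 1), ∑ r ∈ range n,
        (h ^ (β : ℝ) * (cCoeff α (m - n) * cCoeff β (n - 1 - r))) • w r
      = ∑ r ∈ range m, (h ^ (β : ℝ) * cCoeff (α + β) (m - 1 - r)) • w r := by
    rw [Finset.sum_comm' (t' := range m) (s' := fun r => Finset.Ico (r + 1) (m + 1))
      (by intro x y; simp only [Finset.mem_range, Finset.mem_Ico]; omega)]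
    refine Finset.sum_congr rfl fun r hr => ?_
    have hrm : r < m := Finset.mem_range.mp hr
    rw [← Finset.sum_smul]
    congr 1
    rw [Finset.sum_Ico_eq_sum_range]
    have h1 : m + 1 - (r + 1) = (m - 1 - r) + 1 := by omega
    rw [h1, ← Finset.mul_sum]
    congr 1
    rw [← cCoeff_vdm' α β hα1 hβ1 (m - 1 - r)]
    refine Finset.sum_congr rfl fun j hj => ?_
    have : j ≤ m - 1 - r := Nat.lt_succ_iff.mp (Finset.mem_range.mp hj)
    congr 2 <;> omega
  rw [hXm, hxa]
  rw [expand, swap, smul_add, Finset.smul_sum, smul_smul, ← add_assoc]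
  congr 1
  refine Finset.sum_congr rfl fun r _ => ?_
  simp only [hw]
  rw [smul_smul]
  congr 1
  rw [Real.rpow_add hh]
  ring

/-! ### Vector algebra helpers -/

lemma mulVec_sumv {d : ℕ} (A : Matrix (Fin d) (Fin d) ℝ) {ι : Type*} (s : Finset ι)
    (f : ι → Fin d → ℝ) : A.mulVec (∑ i ∈ s, f i) = ∑ i ∈ s, A.mulVec (f i) := by
  classical
  induction s using Finset.induction with
  | empty => simp
  | insert _ _ hnew ih => rw [Finset.sum_insert hnew, Finset.sum_insert hnew, Matrix.mulVec_add, ih]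

theorem semilinear_ivp_solution (h α β : ℝ) (hh : 0 < h)
    (hα1 : 0 < α) (hα2 : α ≤ 1) (hβ1 : 0 < β) (hβ2 : β ≤ 1)
    (d : ℕ) (hd : 1 ≤ d) (A : Matrix (Fin d) (Fin d) ℝ) (γ : ℕ → Fin d → ℝ)
    (xa x0 : Fin d → ℝ) (X : ℕ → Fin d → ℝ)
    (hX : IsSolIVP h α β (fun n x => A.mulVec x + γ n) xa x0 X) (n : ℕ) :
    X n = (∑ k ∈ Finset.range (n + 1),
        (A ^ k).mulVec
          (phi h α β k k ((n : ℤ) - (k : ℤ)) • xa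
            + phi h α β (k + 1) k ((n : ℤ) - (k : ℤ)) • x0))
      + ∑ k ∈ Finset.range (n + 1),
          (A ^ k).mulVec
            (∑ r ∈ Finset.range (n + 1 - 2 * (k + 1)),
              phiTilde h α β (k + 1) (k + 1) ((n : ℤ) - 2 * ((k : ℤ) + 1) - (r : ℤ)) • γ r) := by
  induction n using Nat.strong_induction_on with
  | _ n IH =>
  match n with
  | 0 =>
    have h00 : phi h α β 0 0 ((0 : ℤ) - ((0:ℕ) : ℤ)) = 1 := by
      have := phi_kk h α β 0 0
      simp only [Nat.cast_zero, Nat.cast_ofNat, zero_mul, add_zero, mul_zero, sub_zero,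
        zero_add] at this ⊢
      rw [this, cZ]
      simp [cCoeff_one, Real.rpow_zero]
    have h10 : phi h α β (0 + 1) 0 ((0 : ℤ) - ((0:ℕ) : ℤ)) = 0 := by
      apply phi_vanish; simp
    simp only [zero_add, Finset.sum_range_one, pow_zero, Matrix.one_mulVec, Nat.cast_zero,
      sub_zero] at *
    rw [show ((1:ℕ) - 2 * (0 + 1)) = 0 by norm_num]
    simp only [Finset.range_zero, Finset.sum_empty, Matrix.mulVec_zero, add_zero]
    rw [h00, h10, one_smul, zero_smul, add_zero]
    exact hX.2.1
  | (m + 1) =>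
    -- abbreviations
    have hK : ∀ r : ℕ, True := fun _ => trivial
    -- the solution value at earlier times, with all sums extended to `range m`
    have hEr : ∀ r, r < m → A.mulVec (X r) = ∑ k ∈ Finset.range m,
        (A ^ (k + 1)).mulVec
          (phi h α β k k ((r : ℤ) - (k : ℤ)) • xa
            + phi h α β (k + 1) k ((r : ℤ) - (k : ℤ)) • x0
            + ∑ s ∈ Finset.range m,
                phiTilde h α β (k + 1) (k + 1)
                  ((r : ℤ) - 2 * ((k : ℤ) + 1) - (s : ℤ)) • γ s) := by
      intro r hr
      have hXr : X r = ∑ k ∈ Finset.range m,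
          (A ^ k).mulVec
            (phi h α β k k ((r : ℤ) - (k : ℤ)) • xa
              + phi h α β (k + 1) k ((r : ℤ) - (k : ℤ)) • x0
              + ∑ s ∈ Finset.range m,
                  phiTilde h α β (k + 1) (k + 1)
                    ((r : ℤ) - 2 * ((k : ℤ) + 1) - (s : ℤ)) • γ s) := by
        rw [IH r (by omega)]
        have hin : ∀ k : ℕ,
            (∑ s ∈ Finset.range (r + 1 - 2 * (k + 1)),
              phiTilde h α β (k + 1) (k + 1) ((r : ℤ) - 2 * ((k : ℤ) + 1) - (s : ℤ)) • γ s)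
            = ∑ s ∈ Finset.range m,
              phiTilde h α β (k + 1) (k + 1) ((r : ℤ) - 2 * ((k : ℤ) + 1) - (s : ℤ)) • γ s := by
          intro k
          apply Finset.sum_subset (Finset.range_subset_range.mpr (by omega))
          intro s hs hs2
          simp only [Finset.mem_range, not_lt] at hs hs2
          rw [phiTilde_vanish h α β _ _ _ (by push_cast; omega), zero_smul]
        have e1 : ∑ k ∈ Finset.range (r + 1),
              (A ^ k).mulVec (phi h α β k k ((r : ℤ) - (k : ℤ)) • xa
                + phi h α β (k + 1) k ((r : ℤ) - (k : ℤ)) • x0)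
            = ∑ k ∈ Finset.range m,
              (A ^ k).mulVec (phi h α β k k ((r : ℤ) - (k : ℤ)) • xa
                + phi h α β (k + 1) k ((r : ℤ) - (k : ℤ)) • x0) := by
          apply Finset.sum_subset (Finset.range_subset_range.mpr (by omega))
          intro k hk hk2
          simp only [Finset.mem_range, not_lt] at hk hk2
          rw [phi_vanish h α β k k _ (by push_cast; omega),
            phi_vanish h α β (k + 1) k _ (by push_cast; omega), zero_smul, zero_smul,
            add_zero, Matrix.mulVec_zero]
        have e2 : ∑ k ∈ Finset.range (r + 1),
              (A ^ k).mulVec (∑ s ∈ Finset.range (r + 1 - 2 * (k + 1)),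
                phiTilde h α β (k + 1) (k + 1) ((r : ℤ) - 2 * ((k : ℤ) + 1) - (s : ℤ)) • γ s)
            = ∑ k ∈ Finset.range m,
              (A ^ k).mulVec (∑ s ∈ Finset.range m,
                phiTilde h α β (k + 1) (k + 1) ((r : ℤ) - 2 * ((k : ℤ) + 1) - (s : ℤ)) • γ s) := by
          rw [Finset.sum_congr rfl (fun k _ => by rw [hin k])]
          apply Finset.sum_subset (Finset.range_subset_range.mpr (by omega))
          intro k hk hk2
          simp only [Finset.mem_range, not_lt] at hk hk2
          rw [Finset.sum_eq_zero, Matrix.mulVec_zero]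
          intro s hs
          rw [phiTilde_vanish h α β _ _ _ (by push_cast; omega), zero_smul]
        rw [e1, e2, ← Finset.sum_add_distrib]
        exact Finset.sum_congr rfl fun k _ => (Matrix.mulVec_add _ _ _).symm
      rw [hXr, mulVec_sumv]
      exact Finset.sum_congr rfl fun k _ => by
        rw [Matrix.mulVec_mulVec, ← pow_succ']
    -- scalar convolution step
    have hscal : ∀ k, ∑ r ∈ Finset.range m,
          (h ^ (α + β) * cCoeff (α + β) (m - 1 - r)) •
            (phi h α β k k ((r : ℤ) - (k : ℤ)) • xa
              + phi h α β (k + 1) k ((r : ℤ) - (k : ℤ)) • x0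
              + ∑ s ∈ Finset.range m,
                  phiTilde h α β (k + 1) (k + 1)
                    ((r : ℤ) - 2 * ((k : ℤ) + 1) - (s : ℤ)) • γ s)
        = phi h α β (k + 1) (k + 1) (((m + 1 : ℕ) : ℤ) - ((k + 1 : ℕ) : ℤ)) • xa
          + phi h α β (k + 1 + 1) (k + 1) (((m + 1 : ℕ) : ℤ) - ((k + 1 : ℕ) : ℤ)) • x0
          + ∑ s ∈ Finset.range m,
              phiTilde h α β (k + 1 + 1) (k + 1 + 1)
                (((m + 1 : ℕ) : ℤ) - 2 * (((k + 1 : ℕ) : ℤ) + 1) - (s : ℤ)) • γ s := by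
      intro k
      simp only [smul_add, Finset.smul_sum, smul_smul]
      rw [Finset.sum_add_distrib, Finset.sum_add_distrib, ← Finset.sum_smul, ← Finset.sum_smul,
        conv_I1 h α β m k hh hα1 hβ1, conv_I2 h α β m k hh hα1 hβ1]
      congr 1
      rw [Finset.sum_comm]
      refine Finset.sum_congr rfl fun s _ => ?_
      rw [← Finset.sum_smul, conv_I3 h α β m k s hh hα1 hβ1]
    -- left-hand side in normal form
    have hL : X (m + 1) = xa + (h ^ (α : ℝ) * cCoeff (α + 1) m) • x0
        + (∑ r ∈ Finset.range m, (h ^ (α + β) * cCoeff (α + β) (m - 1 - r)) • γ r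
          + ∑ k ∈ Finset.range m, (A ^ (k + 1)).mulVec
              (phi h α β (k + 1) (k + 1) (((m + 1 : ℕ) : ℤ) - ((k + 1 : ℕ) : ℤ)) • xa
                + phi h α β (k + 1 + 1) (k + 1) (((m + 1 : ℕ) : ℤ) - ((k + 1 : ℕ) : ℤ)) • x0
                + ∑ s ∈ Finset.range m,
                    phiTilde h α β (k + 1 + 1) (k + 1 + 1)
                      (((m + 1 : ℕ) : ℤ) - 2 * (((k + 1 : ℕ) : ℤ) + 1) - (s : ℤ)) • γ s)) := by
      rw [volterra h α β hh hα1 hα2 hβ1 hβ2 A γ xa x0 X hX m]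
      rw [add_assoc, add_assoc]
      congr 2
      have split : ∀ r ∈ Finset.range m,
          (h ^ (α + β) * cCoeff (α + β) (m - 1 - r)) • (A.mulVec (X r) + γ r)
            = (h ^ (α + β) * cCoeff (α + β) (m - 1 - r)) • A.mulVec (X r)
              + (h ^ (α + β) * cCoeff (α + β) (m - 1 - r)) • γ r :=
        fun r _ => smul_add _ _ _
      rw [Finset.sum_congr rfl split, Finset.sum_add_distrib]
      rw [add_comm]
      congr 1
      have : ∀ r ∈ Finset.range m,
          (h ^ (α + β) * cCoeff (α + β) (m - 1 - r)) • A.mulVec (X r)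
            = ∑ k ∈ Finset.range m, (h ^ (α + β) * cCoeff (α + β) (m - 1 - r)) •
                (A ^ (k + 1)).mulVec
                  (phi h α β k k ((r : ℤ) - (k : ℤ)) • xa
                    + phi h α β (k + 1) k ((r : ℤ) - (k : ℤ)) • x0
                    + ∑ s ∈ Finset.range m,
                        phiTilde h α β (k + 1) (k + 1)
                          ((r : ℤ) - 2 * ((k : ℤ) + 1) - (s : ℤ)) • γ s) := by
        intro r hr
        rw [hEr r (Finset.mem_range.mp hr), Finset.smul_sum]
      rw [Finset.sum_congr rfl this, Finset.sum_comm]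
      refine Finset.sum_congr rfl fun k _ => ?_
      rw [Finset.sum_congr rfl (fun r _ => (Matrix.mulVec_smul
        (A ^ (k + 1)) (h ^ (α + β) * cCoeff (α + β) (m - 1 - r)) _).symm),
        ← mulVec_sumv, hscal k]
    -- right-hand side in the same normal form
    rw [hL]
    clear hL hEr hscal hK
    -- k = 0 values
    have h00 : phi h α β 0 0 (((m + 1 : ℕ) : ℤ) - ((0 : ℕ) : ℤ)) = 1 := by
      have := phi_kk h α β 0 (m + 1)
      simp only [Nat.cast_zero, zero_mul, add_zero, mul_zero, sub_zero, zero_add] at this ⊢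
      rw [this, cZ, if_pos (by positivity), Real.rpow_zero, one_mul]
      simp [cCoeff_one]
    have hQ0 : phi h α β (0 + 1) 0 (((m + 1 : ℕ) : ℤ) - ((0 : ℕ) : ℤ)) = h ^ (α : ℝ) * cCoeff (α + 1) m := by
      have := phi_k1k h α β 0 (m + 1)
      simp only [Nat.cast_zero, zero_mul, add_zero, mul_zero, sub_zero, zero_add,
        mul_one, one_mul] at this ⊢
      rw [this, cZ, if_pos (by push_cast; omega)]
      congr 2
      omega
    have hT0 : ∀ s, s < m → phiTilde h α β (0 + 1) (0 + 1)
        (((m + 1 : ℕ) : ℤ) - 2 * (((0 : ℕ) : ℤ) + 1) - (s : ℤ))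
          = h ^ (α + β) * cCoeff (α + β) (m - 1 - s) := by
      intro s hs
      rw [phiTilde_kk h α β (0 + 1)]
      simp only [Nat.cast_ofNat, Nat.cast_one, Nat.cast_zero, zero_add, one_mul]
      rw [cZ, if_pos (by push_cast; omega)]
      congr 2
      omega
    have hS1 : ∑ k ∈ Finset.range (m + 1 + 1),
          (A ^ k).mulVec
            (phi h α β k k (((m + 1 : ℕ) : ℤ) - (k : ℤ)) • xa
              + phi h α β (k + 1) k (((m + 1 : ℕ) : ℤ) - (k : ℤ)) • x0)
        = (∑ k ∈ Finset.range m, (A ^ (k + 1)).mulVec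
              (phi h α β (k + 1) (k + 1) (((m + 1 : ℕ) : ℤ) - ((k + 1 : ℕ) : ℤ)) • xa
                + phi h α β (k + 1 + 1) (k + 1) (((m + 1 : ℕ) : ℤ) - ((k + 1 : ℕ) : ℤ)) • x0))
          + (xa + (h ^ (α : ℝ) * cCoeff (α + 1) m) • x0) := by
      rw [Finset.sum_range_succ' (fun k => (A ^ k).mulVec
        (phi h α β k k (((m + 1 : ℕ) : ℤ) - (k : ℤ)) • xa
          + phi h α β (k + 1) k (((m + 1 : ℕ) : ℤ) - (k : ℤ)) • x0)) (m + 1)]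
      congr 1
      · rw [Finset.sum_range_succ]
        rw [phi_vanish h α β (m + 1) (m + 1) _ (by push_cast; omega),
          phi_vanish h α β (m + 1 + 1) (m + 1) _ (by push_cast; omega), zero_smul, zero_smul,
          add_zero, Matrix.mulVec_zero, add_zero]
      · rw [pow_zero, Matrix.one_mulVec, h00, hQ0, one_smul]
    have hS2 : ∑ k ∈ Finset.range (m + 1 + 1),
          (A ^ k).mulVec
            (∑ s ∈ Finset.range (m + 1 + 1 - 2 * (k + 1)),
              phiTilde h α β (k + 1) (k + 1)
                (((m + 1 : ℕ) : ℤ) - 2 * ((k : ℤ) + 1) - (s : ℤ)) • γ s)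
        = (∑ k ∈ Finset.range m, (A ^ (k + 1)).mulVec
              (∑ s ∈ Finset.range m,
                phiTilde h α β (k + 1 + 1) (k + 1 + 1)
                  (((m + 1 : ℕ) : ℤ) - 2 * (((k + 1 : ℕ) : ℤ) + 1) - (s : ℤ)) • γ s))
          + ∑ s ∈ Finset.range m, (h ^ (α + β) * cCoeff (α + β) (m - 1 - s)) • γ s := by
      rw [Finset.sum_range_succ' (fun k => (A ^ k).mulVec
        (∑ s ∈ Finset.range (m + 1 + 1 - 2 * (k + 1)),
          phiTilde h α β (k + 1) (k + 1)
            (((m + 1 : ℕ) : ℤ) - 2 * ((k : ℤ) + 1) - (s : ℤ)) • γ s)) (m + 1)]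
      congr 1
      · rw [Finset.sum_range_succ, show m + 1 + 1 - 2 * (m + 1 + 1) = 0 by omega]
        simp only [Finset.range_zero, Finset.sum_empty, Matrix.mulVec_zero, add_zero]
        refine Finset.sum_congr rfl fun k hk => congrArg (A ^ (k + 1)).mulVec ?_
        apply Finset.sum_subset (Finset.range_subset_range.mpr (by omega))
        intro s hs hs2
        simp only [Finset.mem_range, not_lt] at hs hs2
        rw [phiTilde_vanish h α β _ _ _ (by push_cast; omega), zero_smul]
      · rw [pow_zero, Matrix.one_mulVec, show m + 1 + 1 - 2 * (0 + 1) = m by omega]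
        exact Finset.sum_congr rfl fun s hs => by rw [hT0 s (Finset.mem_range.mp hs)]
    have hmerge : (∑ k ∈ Finset.range m, (A ^ (k + 1)).mulVec
            (phi h α β (k + 1) (k + 1) (((m + 1 : ℕ) : ℤ) - ((k + 1 : ℕ) : ℤ)) • xa
              + phi h α β (k + 1 + 1) (k + 1) (((m + 1 : ℕ) : ℤ) - ((k + 1 : ℕ) : ℤ)) • x0))
          + (∑ k ∈ Finset.range m, (A ^ (k + 1)).mulVec
              (∑ s ∈ Finset.range m,
                phiTilde h α β (k + 1 + 1) (k + 1 + 1)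
                  (((m + 1 : ℕ) : ℤ) - 2 * (((k + 1 : ℕ) : ℤ) + 1) - (s : ℤ)) • γ s))
        = ∑ k ∈ Finset.range m, (A ^ (k + 1)).mulVec
            (phi h α β (k + 1) (k + 1) (((m + 1 : ℕ) : ℤ) - ((k + 1 : ℕ) : ℤ)) • xa
              + phi h α β (k + 1 + 1) (k + 1) (((m + 1 : ℕ) : ℤ) - ((k + 1 : ℕ) : ℤ)) • x0
              + ∑ s ∈ Finset.range m,
                  phiTilde h α β (k + 1 + 1) (k + 1 + 1)
                    (((m + 1 : ℕ) : ℤ) - 2 * (((k + 1 : ℕ) : ℤ) + 1) - (s : ℤ)) • γ s) := by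
      rw [← Finset.sum_add_distrib]
      exact Finset.sum_congr rfl fun k _ => by rw [← Matrix.mulVec_add]
    rw [hS1, hS2, ← hmerge]
    abel
end

section
/- Let h>0, α,β∈(0,1], d≥1, and let f: ℕ×ℝ^d→ℝ^d satisfy f(n,x)∈ℝ^d_≥ for every n∈ℕ and every x∈ℝ^d_≥. Then the sequential Caputo system is positive: for all initial data x_a, x_0∈ℝ^d_≥, the unique solution X of the sequential Caputo initial value problem satisfies X(n)∈ℝ^d_≥ for every n∈ℕ. -/
lemma cCoeff_zero (γ : ℝ) (hγ : 0 < γ) : cCoeff γ 0 = 1 := by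
  simp [cCoeff, Real.Gamma_one, div_self (Real.Gamma_pos_of_pos hγ).ne']

lemma cCoeff_nonneg (γ : ℝ) (hγ : 0 < γ) (m : ℕ) : 0 ≤ cCoeff γ m := by
  apply div_nonneg
  · exact (Real.Gamma_pos_of_pos (by positivity)).le
  · exact (mul_pos (Real.Gamma_pos_of_pos hγ) (Real.Gamma_pos_of_pos (by positivity))).le

lemma cCoeff_succ (γ : ℝ) (hγ : 0 < γ) (m : ℕ) :
    cCoeff γ (m + 1) = ((γ + m) / (m + 1)) * cCoeff γ m := by
  unfold cCoeff
  push_cast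
  rw [show γ + ((m : ℝ) + 1) = (γ + m) + 1 by ring,
      Real.Gamma_add_one (by positivity),
      show (m : ℝ) + 1 + 1 = ((m : ℝ) + 1) + 1 by ring,
      Real.Gamma_add_one (by positivity)]
  have h1 : Real.Gamma γ ≠ 0 := (Real.Gamma_pos_of_pos hγ).ne'
  have h2 : Real.Gamma ((m : ℝ) + 1) ≠ 0 := (Real.Gamma_pos_of_pos (by positivity)).ne'
  have h3 : (m : ℝ) + 1 ≠ 0 := by positivity
  field_simp

lemma cCoeff_succ_le (γ : ℝ) (hγ0 : 0 < γ) (hγ1 : γ ≤ 1) (m : ℕ) :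
    cCoeff γ (m + 1) ≤ cCoeff γ m := by
  rw [cCoeff_succ γ hγ0 m]
  have hq : (γ + m) / (m + 1) ≤ 1 := by
    rw [div_le_one (by positivity)]; linarith
  have := cCoeff_nonneg γ hγ0 m
  nlinarith

lemma pos_step_real (γ : ℝ) (hγ0 : 0 < γ) (hγ1 : γ ≤ 1) (v : ℕ → ℝ) (n : ℕ)
    (hv : ∀ k ≤ n, 0 ≤ v k)
    (hS : 0 ≤ ∑ k ∈ Finset.range (n + 1), cCoeff γ (n - k) * (v (k + 1) - v k)) :
    0 ≤ v (n + 1) := by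
  have hkey : v (n + 1) =
      (∑ k ∈ Finset.range (n + 1), cCoeff γ (n - k) * (v (k + 1) - v k))
      + (∑ k ∈ Finset.range n, (cCoeff γ (n - (k + 1)) - cCoeff γ (n - k)) * v (k + 1))
      + cCoeff γ n * v 0 := by
    simp only [mul_sub, sub_mul, Finset.sum_sub_distrib]
    rw [Finset.sum_range_succ (f := fun k => cCoeff γ (n - k) * v (k + 1)),
        Finset.sum_range_succ' (f := fun k => cCoeff γ (n - k) * v k)]
    simp [Nat.sub_self, cCoeff_zero γ hγ0]
    ring
  rw [hkey]
  have h2 : 0 ≤ ∑ k ∈ Finset.range n, (cCoeff γ (n - (k + 1)) - cCoeff γ (n - k)) * v (k + 1) := by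
    apply Finset.sum_nonneg
    intro k hk
    rw [Finset.mem_range] at hk
    have heq : n - k = (n - (k + 1)) + 1 := by omega
    apply mul_nonneg
    · rw [heq]
      have := cCoeff_succ_le γ hγ0 hγ1 (n - (k + 1))
      linarith
    · exact hv (k + 1) (by omega)
  have h3 : 0 ≤ cCoeff γ n * v 0 := mul_nonneg (cCoeff_nonneg γ hγ0 n) (hv 0 (by omega))
  linarith

lemma caputo_step (h α : ℝ) (hh : 0 < h) (hα1 : 0 < α) {d : ℕ}
    (u : ℕ → Fin d → ℝ) (n : ℕ) (i : Fin d)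
    (hu : ∀ k ≤ n, 0 ≤ u k i) (hc : 0 ≤ caputo h α u n i) : 0 ≤ u (n + 1) i := by
  by_cases hlt : α < 1
  · apply pos_step_real (1 - α) (by linarith) (by linarith) (fun k => u k i) n hu
    have heq : caputo h α u n i = (h ^ (1 - α) * h⁻¹) *
        ∑ k ∈ Finset.range (n + 1), cCoeff (1 - α) (n - k) * (u (k + 1) i - u k i) := by
      simp only [caputo, if_pos hlt, Pi.smul_apply, Finset.sum_apply, Pi.sub_apply,
        smul_eq_mul, Finset.mul_sum]
      apply Finset.sum_congr rfl
      intro k _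
      ring
    rw [heq] at hc
    have hpos : 0 < h ^ (1 - α) * h⁻¹ :=
      mul_pos (Real.rpow_pos_of_pos hh _) (inv_pos.mpr hh)
    nlinarith [hc, hpos, mul_nonneg (inv_nonneg.mpr hpos.le) hc]
  · simp only [caputo, if_neg hlt, Pi.smul_apply, Pi.sub_apply, smul_eq_mul] at hc
    have := hu n le_rfl
    have hinv : 0 < h⁻¹ := inv_pos.mpr hh
    nlinarith [hc, hinv, this]

theorem ivp_positive (h α β : ℝ) (hh : 0 < h)
    (hα1 : 0 < α) (hα2 : α ≤ 1) (hβ1 : 0 < β) (hβ2 : β ≤ 1)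
    (d : ℕ) (hd : 1 ≤ d) (f : ℕ → (Fin d → ℝ) → Fin d → ℝ)
    (hf : ∀ n : ℕ, ∀ x : Fin d → ℝ, (∀ i, 0 ≤ x i) → ∀ i, 0 ≤ f n x i)
    (xa x0 : Fin d → ℝ) (hxa : ∀ i, 0 ≤ xa i) (hx0 : ∀ i, 0 ≤ x0 i)
    (X : ℕ → Fin d → ℝ) (hX : IsSolIVP h α β f xa x0 X) :
    ∀ n : ℕ, ∀ i, 0 ≤ X n i := by
  obtain ⟨heqn, hX0, hY0⟩ := hX
  have aux : ∀ n : ℕ, (∀ i, 0 ≤ X n i) ∧ (∀ i, 0 ≤ caputo h α X n i) := by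
    intro n
    induction n using Nat.strong_induction_on with
    | _ n ih =>
      match n with
      | 0 =>
        refine ⟨fun i => hX0 ▸ hxa i, fun i => hY0 ▸ hx0 i⟩
      | (m + 1) =>
        constructor
        · intro i
          exact caputo_step h α hh hα1 X m i
            (fun k hk => (ih k (by omega)).1 i)
            ((ih m (by omega)).2 i)
        · intro i
          apply caputo_step h β hh hβ1 (caputo h α X) m i
            (fun k hk => (ih k (by omega)).2 i)
          rw [heqn m]
          exact hf m (X m) (ih m (by omega)).1 i
  exact fun n => (aux n).1
end
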